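/- Assume in addition that there is a constant K₀ ≥ 0 such that ∑_{i=1}^m f_i(λ)λ_i ≥ −K₀(1 + ∑_{i=1}^m f_i(λ)) for every λ ∈ Γ. Let K ⊂ Γ be compact and M > 0. Then there exists a constant C > 0, depending only on m, f, K₀, K and M, such that for every σ ∈ (0,1], every λ ∈ Γ with |λ_m| ≤ M, every μ ∈ K with f(μ) ≥ f(λ), and every index r ∈ {1,…,m−1}: ∑_{i=1}^{m−1} f_i(λ)|λ_i| ≤ σ ∑_{1 ≤ i ≤ m−1, i ≠ r} f_i(λ)λ_i² + (C/σ) ∑_{i=1}^m f_i(λ) + C. -/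

import Mathlib

open Filter Topology

/-- The `i`-th partial derivative `fᵢ(x) = ∂f/∂λᵢ(x)`. -/
noncomputable def pd {m : ℕ} (f : (Fin m → ℝ) → ℝ) (x : Fin m → ℝ) (i : Fin m) : ℝ :=
  fderiv ℝ f x (Pi.single i 1)

/-- The Euclidean norm of a vector in `ℝ^m`. -/
noncomputable def eNorm {m : ℕ} (v : Fin m → ℝ) : ℝ :=
  Real.sqrt (∑ i, (v i) ^ 2)

/-- The unit normal `ν_x = Df(x)/|Df(x)|`. -/
noncomputable def nuv {m : ℕ} (f : (Fin m → ℝ) → ℝ) (x : Fin m → ℝ) : Fin m → ℝ :=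
  fun i => pd f x i / eNorm (pd f x)

/-- Gradient inequality for concave functions: `f μ - f λ ≤ Df(λ)(μ - λ)`. -/
lemma grad_le {m : ℕ} {Γ : Set (Fin m → ℝ)} {f : (Fin m → ℝ) → ℝ}
    (hΓopen : IsOpen Γ) (hf2 : ConcaveOn ℝ Γ f)
    (hfs : ContDiffOn ℝ (⊤ : ℕ∞) f Γ) {lam μ : Fin m → ℝ} (hlam : lam ∈ Γ) (hμ : μ ∈ Γ) :
    f μ - f lam ≤ fderiv ℝ f lam (μ - lam) := by
  have hdiff : DifferentiableAt ℝ f lam :=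
    (hfs.contDiffAt (hΓopen.mem_nhds hlam)).differentiableAt (by simp)
  set L := fderiv ℝ f lam with hL
  have hF : HasFDerivAt f L lam := hdiff.hasFDerivAt
  set c : ℝ → (Fin m → ℝ) := fun t => lam + t • (μ - lam) with hc
  have hcd : HasDerivAt c (μ - lam) 0 := by
    have h1 : HasDerivAt (fun t : ℝ => t • (μ - lam)) ((1:ℝ) • (μ - lam)) 0 :=
      (hasDerivAt_id 0).smul_const (μ - lam)
    simpa [hc] using h1.const_add lam
  have hc0 : c 0 = lam := by simp [hc]
  have hφ : HasDerivAt (f ∘ c) (L (μ - lam)) 0 := by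
    refine HasFDerivAt.comp_hasDerivAt 0 ?_ hcd
    rw [hc0]; exact hF
  have htend : Tendsto (slope (f ∘ c) 0) (𝓝[>] 0) (𝓝 (L (μ - lam))) :=
    (hasDerivAt_iff_tendsto_slope.mp hφ).mono_left
      (nhdsWithin_mono 0 (fun x hx => ne_of_gt hx))
  refine ge_of_tendsto htend ?_
  filter_upwards [Ioo_mem_nhdsGT_of_mem (by norm_num : (0:ℝ) ∈ Set.Ico (0:ℝ) 1)] with t ht
  obtain ⟨ht0, ht1⟩ := ht
  have hcon := hf2.2 hlam hμ (by linarith : (0:ℝ) ≤ 1 - t) ht0.le (by ring)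
  have hct : c t = (1 - t) • lam + t • μ := by simp [hc]; module
  have hval : (1 - t) * f lam + t * f μ ≤ f (c t) := by
    rw [hct]; simpa [smul_eq_mul] using hcon
  have hs : slope (f ∘ c) 0 t = (f (c t) - f lam) / t := by
    simp [slope_def_field, hc0]
  rw [hs, le_div_iff₀ ht0]
  nlinarith

/-- Representation of a continuous linear functional on `ℝ^m` via its values on the basis. -/
lemma clm_eq_sum {m : ℕ} (L : (Fin m → ℝ) →L[ℝ] ℝ) (v : Fin m → ℝ) :
    L v = ∑ i, v i * L (Pi.single i 1) := by
  have hv : v = ∑ i, v i • (Pi.single i 1 : Fin m → ℝ) := by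
    funext j
    rw [Finset.sum_apply]
    simp [Pi.single_apply]
  conv_lhs => rw [hv]
  rw [map_sum]
  simp [smul_eq_mul]

set_option maxHeartbeats 1000000 in
/-- Lemma 6.1: under the extra condition
`∑ fᵢ(λ)λᵢ ≥ -K₀(1 + ∑ fᵢ(λ))` on `Γ`, for compact `K ⊂ Γ` and `M > 0` there is `C > 0`
such that for all `σ ∈ (0,1]`, `λ ∈ Γ` with `|λ_m| ≤ M`, `μ ∈ K` with `f(μ) ≥ f(λ)`, and
any index `r ∈ {1,…,m-1}`:
`∑_{i<m} fᵢ|λᵢ| ≤ σ ∑_{i<m, i≠r} fᵢλᵢ² + (C/σ) ∑ᵢ fᵢ + C`. -/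
theorem stmt_3 (m : ℕ) (hm : 2 ≤ m)
    (Γ : Set (Fin m → ℝ)) (f : (Fin m → ℝ) → ℝ)
    (hΓopen : IsOpen Γ) (hΓconv : Convex ℝ Γ) (hΓne : Γ.Nonempty)
    (hΓproper : Γ ≠ Set.univ)
    (hΓcone : ∀ t : ℝ, 0 < t → ∀ x ∈ Γ, t • x ∈ Γ)
    (hΓperm : ∀ π : Equiv.Perm (Fin m), ∀ x ∈ Γ, x ∘ π ∈ Γ)
    (hΓpos : {x : Fin m → ℝ | ∀ i, 0 < x i} ⊆ Γ)
    (hfsmooth : ContDiffOn ℝ (⊤ : ℕ∞) f Γ)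
    (hfsymm : ∀ π : Equiv.Perm (Fin m), ∀ x ∈ Γ, f (x ∘ π) = f x)
    (hf1 : ∀ x ∈ Γ, ∀ i, 0 < pd f x i)
    (hf2 : ConcaveOn ℝ Γ f)
    (K₀ : ℝ) (hK₀ : 0 ≤ K₀)
    (hc290 : ∀ x ∈ Γ, ∑ i, pd f x i * x i ≥ -K₀ * (1 + ∑ i, pd f x i))
    (K : Set (Fin m → ℝ)) (hK : IsCompact K) (hKΓ : K ⊆ Γ)
    (M : ℝ) (hM : 0 < M) :
    ∃ C : ℝ, 0 < C ∧ ∀ σ : ℝ, 0 < σ → σ ≤ 1 →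
      ∀ lam ∈ Γ, |lam (⟨m - 1, by omega⟩ : Fin m)| ≤ M →
      ∀ μ ∈ K, f lam ≤ f μ →
      ∀ r : Fin m, (r : ℕ) < m - 1 →
      ∑ i ∈ Finset.univ.filter (fun i : Fin m => (i : ℕ) < m - 1), pd f lam i * |lam i|
        ≤ σ * ∑ i ∈ Finset.univ.filter (fun i : Fin m => (i : ℕ) < m - 1 ∧ i ≠ r),
              pd f lam i * (lam i) ^ 2
          + (C / σ) * ∑ i, pd f lam i + C := by
  obtain ⟨B0, hB0⟩ := hK.isBounded.exists_norm_le
  set B : ℝ := max B0 0 with hBdef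
  have hB : 0 ≤ B := le_max_right _ _
  refine ⟨1 + K₀ + M + B, by linarith, ?_⟩
  intro σ hσ hσ1 lam hlam hMb μ hμK hfμ r hr
  set e : Fin m := ⟨m - 1, by omega⟩ with he
  set g : Fin m → ℝ := pd f lam with hg'
  have hg : ∀ i, 0 < g i := hf1 lam hlam
  set S : Finset (Fin m) := Finset.univ.filter (fun i : Fin m => (i : ℕ) < m - 1) with hSdef
  have hrS : r ∈ S := Finset.mem_filter.mpr ⟨Finset.mem_univ r, hr⟩
  have hset : Finset.univ.filter (fun i : Fin m => (i : ℕ) < m - 1 ∧ i ≠ r) = S.erase r := by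
    ext i
    simp only [hSdef, Finset.mem_filter, Finset.mem_erase, Finset.mem_univ, true_and]
    tauto
  rw [hset]
  set A' : ℝ := ∑ i ∈ S.erase r, g i * |lam i| with hA'def
  set Q : ℝ := ∑ i ∈ S.erase r, g i * (lam i) ^ 2 with hQdef
  set F : ℝ := ∑ i, g i with hFdef
  set F' : ℝ := ∑ i ∈ S.erase r, g i with hF'def
  set T : ℝ := ∑ i, g i * lam i with hTdef
  set T' : ℝ := ∑ i ∈ S.erase r, g i * lam i with hT'def
  -- splitting of full sums at the last index
  have hcompl : Finset.univ.filter (fun i : Fin m => ¬ (i : ℕ) < m - 1) = {e} := by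
    ext i
    simp only [Finset.mem_filter, Finset.mem_univ, true_and, Finset.mem_singleton]
    constructor
    · intro h
      have := i.isLt
      exact Fin.ext (by simp [he]; omega)
    · intro h
      subst h
      simp [he]
  have hsplit : ∀ h : Fin m → ℝ, ∑ i, h i = (∑ i ∈ S, h i) + h e := by
    intro h
    rw [← Finset.sum_filter_add_sum_filter_not Finset.univ (fun i : Fin m => (i : ℕ) < m - 1) h,
      hcompl, Finset.sum_singleton]
  have hA : ∑ i ∈ S, g i * |lam i| = g r * |lam r| + A' :=
    (Finset.add_sum_erase S _ hrS).symm
  have hSS : ∑ i ∈ S, g i * lam i = g r * lam r + T' :=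
    (Finset.add_sum_erase S _ hrS).symm
  have hFS : ∑ i ∈ S, g i = g r + F' := (Finset.add_sum_erase S _ hrS).symm
  have hT : T = g r * lam r + T' + g e * lam e := by
    rw [hTdef, hsplit (fun i => g i * lam i), hSS]
  have hF : F = g r + F' + g e := by
    rw [hFdef, hsplit g, hFS]
  have hT'A : |T'| ≤ A' := by
    calc |T'| ≤ ∑ i ∈ S.erase r, |g i * lam i| := Finset.abs_sum_le_sum_abs _ _
    _ = A' := by
        apply Finset.sum_congr rfl
        intro i _
        rw [abs_mul, abs_of_pos (hg i)]
  have hA' : A' ≤ σ/2 * Q + (1/σ)/2 * F' := by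
    rw [hQdef, hF'def, Finset.mul_sum, Finset.mul_sum, ← Finset.sum_add_distrib]
    apply Finset.sum_le_sum
    intro i _
    have h2σ : (0:ℝ) < 2*σ := by linarith
    have hx : |lam i| ≤ (σ^2 * (lam i)^2 + 1)/(2*σ) := by
      rw [le_div_iff₀ h2σ]
      nlinarith [sq_nonneg (σ * |lam i| - 1), sq_abs (lam i)]
    calc g i * |lam i| ≤ g i * ((σ^2 * (lam i)^2 + 1)/(2*σ)) :=
          mul_le_mul_of_nonneg_left hx (hg i).le
    _ = σ/2 * (g i * (lam i)^2) + (1/σ)/2 * g i := by field_simp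
  have hF'F : F' ≤ F :=
    Finset.sum_le_sum_of_subset_of_nonneg (Finset.subset_univ _) (fun i _ _ => (hg i).le)
  have hgeF : g e ≤ F := Finset.single_le_sum (fun i _ => (hg i).le) (Finset.mem_univ e)
  have hQ0 : 0 ≤ Q := Finset.sum_nonneg (fun i _ => mul_nonneg (hg i).le (sq_nonneg _))
  have hF'0 : 0 ≤ F' := Finset.sum_nonneg (fun i _ => (hg i).le)
  have hF0 : 0 < F := by
    have : Nonempty (Fin m) := ⟨e⟩
    exact Finset.sum_pos (fun i _ => hg i) Finset.univ_nonempty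
  -- bound from concavity and compact K
  have hT1 : T ≤ B * F := by
    have hgrad := grad_le hΓopen hf2 hfsmooth hlam (hKΓ hμK)
    have hL : fderiv ℝ f lam (μ - lam) = ∑ i, (μ i - lam i) * g i := by
      rw [clm_eq_sum (fderiv ℝ f lam) (μ - lam)]
      apply Finset.sum_congr rfl
      intro i _
      simp [hg', pd]
    have hμB : ∀ i, μ i ≤ B := by
      intro i
      calc μ i ≤ |μ i| := le_abs_self _
      _ = ‖μ i‖ := (Real.norm_eq_abs _).symm
      _ ≤ ‖μ‖ := norm_le_pi_norm μ i
      _ ≤ B0 := hB0 μ hμK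
      _ ≤ B := le_max_left _ _
    have h0 : 0 ≤ ∑ i, (μ i - lam i) * g i := by
      rw [← hL]
      linarith [hgrad]
    have hsum : ∑ i, (μ i - lam i) * g i = (∑ i, μ i * g i) - T := by
      rw [hTdef, ← Finset.sum_sub_distrib]
      apply Finset.sum_congr rfl
      intro i _
      ring
    have h2 : ∑ i, μ i * g i ≤ B * F := by
      rw [hFdef, Finset.mul_sum]
      exact Finset.sum_le_sum (fun i _ => mul_le_mul_of_nonneg_right (hμB i) (hg i).le)
    rw [hsum] at h0
    linarith
  have hT2 : -K₀ * (1 + F) ≤ T := hc290 lam hlam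
  have hMb' : |lam e| ≤ M := hMb
  have hge : |g e * lam e| ≤ M * g e := by
    rw [abs_mul, abs_of_pos (hg e), mul_comm]
    exact mul_le_mul_of_nonneg_right hMb' (hg e).le
  obtain ⟨hge1, hge2⟩ := abs_le.mp hge
  obtain ⟨hT'1, hT'2⟩ := abs_le.mp hT'A
  have hb : |g r * lam r| ≤ (B + K₀) * F + K₀ + M * g e + A' := by
    rw [abs_le]
    have hKF : 0 ≤ K₀ * F := mul_nonneg hK₀ hF0.le
    have hBF : 0 ≤ B * F := mul_nonneg hB hF0.le
    constructor
    · linarith [hT2, hT'2, hge2, hT, hKF, hBF]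
    · linarith [hT1, hT'1, hge1, hT, hKF, hBF]
  have grabs : g r * |lam r| = |g r * lam r| := by
    rw [abs_mul, abs_of_pos (hg r)]
  -- final combination
  have hdiv : (B + K₀ + M) ≤ (K₀ + M + B)/σ := by
    rw [le_div_iff₀ hσ]
    nlinarith
  have p1 : M * g e ≤ M * F := mul_le_mul_of_nonneg_left hgeF hM.le
  have p2 : (1/σ) * F' ≤ (1/σ) * F :=
    mul_le_mul_of_nonneg_left hF'F (by positivity)
  have p3 : (1/σ + (B + K₀ + M)) * F ≤ ((1 + K₀ + M + B)/σ) * F := by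
    have hsd : (1 + K₀ + M + B)/σ = 1/σ + (K₀ + M + B)/σ := by
      rw [show (1 + K₀ + M + B) = 1 + (K₀ + M + B) by ring, add_div]
    rw [hsd]
    exact mul_le_mul_of_nonneg_right (by linarith [hdiv]) hF0.le
  have hKC : K₀ ≤ 1 + K₀ + M + B := by linarith
  have e1 : σ/2 * Q + σ/2 * Q = σ * Q := by ring
  have e2 : (1/σ)/2 * F' + (1/σ)/2 * F' = (1/σ) * F' := by ring
  have e3 : (1/σ + (B + K₀ + M)) * F = (1/σ) * F + (B + K₀) * F + M * F := by ring
  rw [hA, grabs]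
  linarith [hb, hA', p1, p2, p3, e1, e2, e3, hKC]
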